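/- Convexity order lemma: let v be a point outside the convex hull of a finite planar point set S in convex position, and let the back points of S with respect to v be those not strictly between the two tangent points as seen from v. Then the angular order around v in which a ray rotating about v encounters the back points coincides with their cyclic order along the boundary of the convex hull. -/

import Mathlib

/-- The planar cross product. -/
def cross (p q : ℝ × ℝ) : ℝ := p.1 * q.2 - p.2 * q.1

lemma cross_identity (a b c : ℝ × ℝ) :
    cross b c • a + cross c a • b + cross a b • c = 0 := by
  have h1 : (cross b c • a + cross c a • b + cross a b • c).1 = 0 := by
    simp [cross]; ring
  have h2 : (cross b c • a + cross c a • b + cross a b • c).2 = 0 := by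
    simp [cross]; ring
  exact Prod.ext h1 h2

lemma exists_smul_of_cross_eq_zero {b w : ℝ × ℝ} (hb : b ≠ 0)
    (h : cross b w = 0) : ∃ k : ℝ, w = k • b := by
  rcases eq_or_ne b.1 0 with h1 | h1
  · have h2 : b.2 ≠ 0 := fun h2 => hb (Prod.ext h1 h2)
    refine ⟨w.2 / b.2, Prod.ext ?_ ?_⟩
    · have hw1 : w.1 = 0 := by
        have hc : b.1 * w.2 - b.2 * w.1 = 0 := h
        rw [h1] at hc
        field_simp at hc
        rcases mul_eq_zero.1 (by linarith : b.2 * w.1 = 0) with h' | h'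
        · exact absurd h' h2
        · exact h'
      simp [hw1, h1]
    · simp
      field_simp
  · refine ⟨w.1 / b.1, Prod.ext ?_ ?_⟩
    · simp; field_simp
    · have hc : b.1 * w.2 - b.2 * w.1 = 0 := h
      simp
      field_simp
      nlinarith [hc]

lemma key_extreme {S : Finset (ℝ × ℝ)} {q x y : ℝ × ℝ} (hq : q ∈ S)
    (hne : ((S : Set (ℝ × ℝ)) \ {q}).Nonempty)
    (hx : x ∈ convexHull ℝ (S : Set (ℝ × ℝ)))
    (hy : y ∈ convexHull ℝ (S : Set (ℝ × ℝ)))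
    (hxq : x ≠ q) (hmem : q ∈ openSegment ℝ x y) :
    q ∈ convexHull ℝ ((S : Set (ℝ × ℝ)) \ {q}) := by
  have hs : insert q ((S : Set (ℝ × ℝ)) \ {q}) = (S : Set (ℝ × ℝ)) := by
    rw [Set.insert_diff_singleton, Set.insert_eq_self.2 (by exact_mod_cast hq)]
  rw [← hs, convexHull_insert hne, mem_convexJoin] at hx hy
  obtain ⟨qx, hqx, x', hx', hxx⟩ := hx
  obtain ⟨qy, hqy, y', hy', hyy⟩ := hy
  rw [Set.mem_singleton_iff] at hqx hqy
  rw [hqx] at hxx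
  rw [hqy] at hyy
  obtain ⟨α, α', hα, hα', hαs, hxeq⟩ := hxx
  obtain ⟨β, β', hβ, hβ', hβs, hyeq⟩ := hyy
  obtain ⟨m', m, hm', hm, hms, hqeq⟩ := hmem
  obtain rfl : α = 1 - α' := by linarith
  obtain rfl : β = 1 - β' := by linarith
  obtain rfl : m' = 1 - m := by linarith
  rw [← hxeq, ← hyeq] at hqeq
  have hqeq1 := congrArg Prod.fst hqeq
  have hqeq2 := congrArg Prod.snd hqeq
  simp only [Prod.fst_add, Prod.snd_add, Prod.smul_fst, Prod.smul_snd, smul_eq_mul]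
    at hqeq1 hqeq2
  have hweq : ((1 - m) * α' + m * β') • q = ((1 - m) * α') • x' + (m * β') • y' := by
    refine Prod.ext ?_ ?_ <;>
      simp only [Prod.fst_add, Prod.snd_add, Prod.smul_fst, Prod.smul_snd, smul_eq_mul]
    · linear_combination -hqeq1
    · linear_combination -hqeq2
  have hwnn : 0 ≤ (1 - m) * α' + m * β' :=
    add_nonneg (mul_nonneg (by linarith) hα') (mul_nonneg hm.le hβ')
  rcases eq_or_lt_of_le hwnn with hw0 | hw0
  · exfalso
    have e1 : (1 - m) * α' = 0 :=
      le_antisymm (by nlinarith [mul_nonneg hm.le hβ'])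
        (mul_nonneg (by linarith) hα')
    have hα'0 : α' = 0 := by
      rcases mul_eq_zero.1 e1 with h' | h'
      · exfalso; linarith
      · exact h'
    apply hxq
    rw [← hxeq, hα'0]
    simp
  · have hq' : q = ((1 - m) * α' / ((1 - m) * α' + m * β')) • x'
        + (m * β' / ((1 - m) * α' + m * β')) • y' := by
      have h0 : q = ((1 - m) * α' + m * β')⁻¹ • (((1 - m) * α' + m * β') • q) := by
        rw [smul_smul, inv_mul_cancel₀ hw0.ne', one_smul]
      rw [h0, hweq, smul_add, smul_smul, smul_smul, div_eq_inv_mul, div_eq_inv_mul]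
    have hin : ((1 - m) * α' / ((1 - m) * α' + m * β')) • x'
        + (m * β' / ((1 - m) * α' + m * β')) • y' ∈ convexHull ℝ ((S : Set (ℝ × ℝ)) \ {q}) := by
      refine (convex_convexHull ℝ _) hx' hy' ?_ ?_ ?_
      · exact div_nonneg (mul_nonneg (by linarith) hα') hw0.le
      · exact div_nonneg (mul_nonneg hm.le hβ') hw0.le
      · field_simp
    rwa [← hq'] at hin

/-- Convexity order lemma: for a finite set `S` in convex position and a view point `v`
outside its convex hull, the back points of `S` (points of the far arc, together with
the tangent points) are encountered by a ray rotating about `v` in the same order in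
which they appear along the boundary of the convex hull: three back points in
counterclockwise angular order around `v` are in counterclockwise order on the hull. -/
theorem stmt17 (S : Finset (ℝ × ℝ)) (v : ℝ × ℝ)
    (hconv : ∀ p ∈ S, p ∉ convexHull ℝ ((S : Set (ℝ × ℝ)) \ {p}))
    (hv : v ∉ convexHull ℝ (S : Set (ℝ × ℝ)))
    (back : ℝ × ℝ → Prop)
    (hback : ∀ p, back p ↔ p ∈ S ∧
      (¬ (segment ℝ v p ∩ convexHull ℝ (S : Set (ℝ × ℝ)) ⊆ {p}) ∨
        (∀ q ∈ S, 0 ≤ cross (p - v) (q - v)) ∨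
        (∀ q ∈ S, cross (p - v) (q - v) ≤ 0))) :
    ∀ p q r : ℝ × ℝ, back p → back q → back r → p ≠ q → q ≠ r → p ≠ r →
      0 < cross (p - v) (q - v) → 0 < cross (q - v) (r - v) →
      0 < cross (q - p) (r - p) := by
  intro p q r hbp hbq hbr hpq hqr hpr hab hbc
  obtain ⟨hpS, -⟩ := (hback p).1 hbp
  obtain ⟨hqS, hqcase⟩ := (hback q).1 hbq
  obtain ⟨hrS, -⟩ := (hback r).1 hbr
  set a : ℝ × ℝ := p - v with ha
  set b : ℝ × ℝ := q - v with hb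
  set c : ℝ × ℝ := r - v with hc
  have hphull : p ∈ convexHull ℝ (S : Set (ℝ × ℝ)) := subset_convexHull ℝ _ hpS
  have hqhull : q ∈ convexHull ℝ (S : Set (ℝ × ℝ)) := subset_convexHull ℝ _ hqS
  have hrhull : r ∈ convexHull ℝ (S : Set (ℝ × ℝ)) := subset_convexHull ℝ _ hrS
  have hbne : b ≠ 0 := by
    rw [hb, sub_ne_zero]
    rintro rfl; exact hv hqhull
  obtain ⟨f, u, hfv, hfS⟩ :=
    geometric_hahn_banach_point_closed (convex_convexHull ℝ _)
      (S.finite_toSet.isClosed_convexHull ℝ) hv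
  have hfpos : ∀ z ∈ convexHull ℝ (S : Set (ℝ × ℝ)), 0 < f (z - v) := by
    intro z hz
    have := hfS z hz
    rw [map_sub]
    linarith
  have hA : 0 < f a := hfpos p hphull
  have hB : 0 < f b := hfpos q hqhull
  have hC : 0 < f c := hfpos r hrhull
  have hid := congrArg f (cross_identity a b c)
  rw [map_add, map_add, map_smul, map_smul, map_smul, map_zero, smul_eq_mul,
    smul_eq_mul, smul_eq_mul] at hid
  have hca : cross c a < 0 := by nlinarith [mul_pos hbc hA, mul_pos hab hC]
  have hac : 0 < cross a c := by
    have : cross a c = -cross c a := by simp [cross]; ring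
    linarith
  rcases hqcase with hseg | htan | htan
  · -- main case
    rw [Set.not_subset] at hseg
    obtain ⟨x, ⟨hxseg, hxhull⟩, hxq⟩ := hseg
    rw [Set.mem_singleton_iff] at hxq
    obtain ⟨t1, t2, ht1, ht2, htsum, hteq⟩ := hxseg
    obtain rfl : t1 = 1 - t2 := by linarith
    have hxv : x - v = t2 • b := by rw [← hteq, hb]; module
    have ht2lt : t2 < 1 := by
      rcases lt_or_eq_of_le (show t2 ≤ 1 by linarith) with h | h
      · exact h
      · exfalso; apply hxq; rw [← hteq, h]; norm_num
    have hqp : q - p = b - a := (sub_sub_sub_cancel_right q p v).symm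
    have hrp : r - p = c - a := (sub_sub_sub_cancel_right r p v).symm
    rw [hqp, hrp]
    by_contra hle
    push_neg at hle
    have hDpos : 0 < cross a b + cross b c := by positivity
    set u' : ℝ := cross a b / (cross a b + cross b c) with hu'
    have hu0 : 0 < u' := div_pos hab hDpos
    have hu1 : u' < 1 := (div_lt_one hDpos).2 (by linarith)
    set y : ℝ × ℝ := (1 - u') • p + u' • r with hy
    have hyhull : y ∈ convexHull ℝ (S : Set (ℝ × ℝ)) :=
      (convex_convexHull ℝ _) hphull hrhull (by linarith) hu0.le (by ring)
    have hyv : y - v = (1 - u') • a + u' • c := by rw [hy, ha, hc]; module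
    have hcby : cross b (y - v) = 0 := by
      rw [hyv]
      have hab' : cross b a = -cross a b := by simp [cross]; ring
      have hexp : cross b ((1 - u') • a + u' • c)
          = (1 - u') * cross b a + u' * cross b c := by simp [cross]; ring
      rw [hexp, hab', hu']
      field_simp
      ring
    obtain ⟨k, hk⟩ := exists_smul_of_cross_eq_zero hbne hcby
    have hfy : f (y - v) = k * f b := by rw [hk, map_smul, smul_eq_mul]
    have hfy2 : f (y - v) = (1 - u') * f a + u' * f c := by
      rw [hyv, map_add, map_smul, map_smul, smul_eq_mul, smul_eq_mul]
    have hkfb : 0 < k * f b := by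
      rw [← hfy, hfy2]
      have h1 := mul_pos (show (0:ℝ) < 1 - u' by linarith) hA
      have h2 := mul_pos hu0 hC
      linarith
    have hkpos : 0 < k := by nlinarith
    have hk1 : 1 ≤ k := by
      have he : k • b - a = u' • (c - a) := by
        have h3 : k • b = (1 - u') • a + u' • c := by rw [← hk, hyv]
        rw [h3]; module
      have hy0 : cross (k • b - a) (c - a) = 0 := by rw [he]; simp [cross]; ring
      have hdiff : cross (k • b - a) (c - a) - cross (b - a) (c - a)
          = (k - 1) * (cross b c + cross a b) := by simp [cross]; ring
      nlinarith
    rcases eq_or_lt_of_le hk1 with hk1' | hk1'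
    · -- k = 1 : q lies on segment p r
      have hqy : q = y := by
        have h4 : y - v = q - v := by rw [hk, ← hk1', one_smul, hb]
        exact (sub_left_inj.1 h4).symm
      apply hconv q hqS
      have hin : (1 - u') • p + u' • r ∈ convexHull ℝ ((S : Set (ℝ × ℝ)) \ {q}) := by
        refine (convex_convexHull ℝ _)
          (subset_convexHull ℝ ((S : Set (ℝ × ℝ)) \ {q}) ⟨hpS, by simpa using hpq⟩)
          (subset_convexHull ℝ ((S : Set (ℝ × ℝ)) \ {q}) ⟨hrS, by simpa using hqr.symm⟩)
          ?_ hu0.le ?_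
        · linarith
        · ring
      rwa [← hy, ← hqy] at hin
    · -- k > 1 : q strictly inside segment x y
      set μ : ℝ := (1 - t2) / (k - t2) with hμ
      have hkt : 0 < k - t2 := by linarith
      have hμ0 : 0 < μ := div_pos (by linarith) hkt
      have hμ1 : μ < 1 := (div_lt_one hkt).2 (by linarith)
      have hxeq : x = v + t2 • b := by
        have h5 := hxv
        rw [sub_eq_iff_eq_add] at h5
        rw [h5]; abel
      have hyeq : y = v + k • b := by
        have h6 := hk
        rw [sub_eq_iff_eq_add] at h6
        rw [h6]; abel
      have hqveq : q = v + b := by rw [hb]; abel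
      have hcomb : (1 - μ) • x + μ • y = q := by
        rw [hxeq, hyeq, hqveq]
        have hscal : (1 - μ) * t2 + μ * k = 1 := by
          rw [hμ]; field_simp; ring
        have h7 : (1 - μ) • (v + t2 • b) + μ • (v + k • b)
            = ((1 - μ) + μ) • v + ((1 - μ) * t2 + μ * k) • b := by module
        rw [h7, hscal, show (1 - μ) + μ = (1:ℝ) by ring]
        simp
      have hopen : q ∈ openSegment ℝ x y :=
        ⟨1 - μ, μ, by linarith, hμ0, by ring, hcomb⟩
      exact hconv q hqS
        (key_extreme hqS ⟨p, hpS, by simpa using hpq⟩ hxhull hyhull hxq hopen)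
  · -- tangent case: all on nonneg side, contradicts p
    have hp' := htan p hpS
    rw [← ha] at hp'
    have hba : cross b a = -cross a b := by simp [cross]; ring
    rw [hba] at hp'
    exfalso; linarith
  · -- tangent case: all on nonpos side, contradicts r
    have hr' := htan r hrS
    rw [← hc] at hr'
    exfalso; linarith
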